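/- arXiv:2105.13966 — 2 statements merged into one kernel-verified Lean document; each statement's English description precedes it below -/
import Mathlib

section
/- Let β be a positive integer. Let x_1,…,x_β be i.i.d. arcsine-distributed random variables and d uniform on {−1,+1}, independent of the x_k. In the no-fading scenario (channel amplitude identically 1), let Y = (1+d)·Σ_{k=1}^{β} x_k. Then for any reals ε₁, ε₂, the harvested DC satisfies ε₁·E[Y²] + ε₂·E[Y⁴] = ε₁·β + 3·ε₂·β·(2β−1). -/
open MeasureTheory ProbabilityTheory
open scoped ENNReal

/-- The arcsine (Chebyshev invariant) distribution on (−1,1), with density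
1/(π√(1−x²)) for |x| < 1 and 0 otherwise. -/
noncomputable def arcsineMeasure : Measure ℝ :=
  volume.withDensity fun x =>
    ENNReal.ofReal (if |x| < 1 then 1 / (Real.pi * Real.sqrt (1 - x ^ 2)) else 0)

/-- The uniform distribution on {−1, +1}. -/
noncomputable def rademacherMeasure : Measure ℝ :=
  (1 / 2 : ℝ≥0∞) • Measure.dirac (-1) + (1 / 2 : ℝ≥0∞) • Measure.dirac 1


open Set Filter
open scoped Topology

noncomputable def rho (x : ℝ) : ℝ :=
  if |x| < 1 then 1 / (Real.pi * Real.sqrt (1 - x ^ 2)) else 0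

lemma rho_nonneg (x : ℝ) : 0 ≤ rho x := by
  unfold rho
  split
  · positivity
  · exact le_refl 0

lemma measurable_rho : Measurable rho := by
  unfold rho
  apply Measurable.ite
  · exact measurableSet_lt (by fun_prop) measurable_const
  · fun_prop
  · fun_prop

lemma arcsine_integral (g : ℝ → ℝ) :
    ∫ t, g t ∂arcsineMeasure = ∫ t, rho t * g t := by
  have h1 : arcsineMeasure = volume.withDensity fun t => ((rho t).toNNReal : ℝ≥0∞) := by
    unfold arcsineMeasure rho
    rfl
  rw [h1, integral_withDensity_eq_integral_smul (measurable_rho.real_toNNReal) g]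
  congr 1
  funext t
  rw [NNReal.smul_def, Real.coe_toNNReal _ (rho_nonneg t), smul_eq_mul]

lemma rho_mul_pow_eq (n : ℕ) :
    (fun t => rho t * t ^ n)
      = (Ioo (-1:ℝ) 1).indicator (fun t => t ^ n / (Real.pi * Real.sqrt (1 - t ^ 2))) := by
  funext t
  unfold rho
  by_cases h : |t| < 1
  · rw [if_pos h, Set.indicator_of_mem (by simpa [Set.mem_Ioo] using abs_lt.mp h)]
    ring
  · rw [if_neg h, Set.indicator_of_notMem (by simpa [Set.mem_Ioo] using fun a b => h (abs_lt.mpr ⟨a, b⟩))]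
    ring

lemma arcsine_moment_odd (n : ℕ) (hn : Odd n) : ∫ t, t ^ n ∂arcsineMeasure = 0 := by
  rw [arcsine_integral]
  set h : ℝ → ℝ := fun t => rho t * t ^ n with hh
  have hodd : ∀ t, h (-t) = -(h t) := by
    intro t
    have hr : rho (-t) = rho t := by unfold rho; rw [abs_neg, neg_sq]
    simp only [hh, hr, hn.neg_pow, mul_neg]
  have hcomp : ∫ t, h (-t) = ∫ t, h t :=
    (Measure.measurePreserving_neg volume).integral_comp
      (Homeomorph.neg ℝ).measurableEmbedding h
  have : ∫ t, h (-t) = -∫ t, h t := by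
    simp only [hodd]
    exact integral_neg h
  linarith [hcomp, this]

lemma integral_Ioo_eval (f F : ℝ → ℝ)
    (hcf : ContinuousOn f (Ioo (-1:ℝ) 1))
    (hnn : ∀ x, 0 ≤ f x)
    (hF : ∀ x ∈ Ioo (-1:ℝ) 1, HasDerivAt F (f x) x)
    (hFc : Continuous F) :
    ∫ x in Ioo (-1:ℝ) 1, f x = F 1 - F (-1) := by
  set a : ℕ → ℝ := fun n => 1 - ((n : ℝ) + 2)⁻¹ with ha_def
  have hinv : ∀ n : ℕ, 0 < ((n : ℝ) + 2)⁻¹ ∧ ((n : ℝ) + 2)⁻¹ ≤ 2⁻¹ := by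
    intro n
    constructor
    · positivity
    · apply inv_anti₀ (by norm_num)
      have := Nat.cast_nonneg (α := ℝ) n
      linarith
  have ha0 : ∀ n, 0 < a n ∧ a n < 1 := by
    intro n
    have := hinv n
    constructor <;> simp only [ha_def] <;> [linarith [this.2]; linarith [this.1]]
  have hsub : ∀ n, Icc (-(a n)) (a n) ⊆ Ioo (-1:ℝ) 1 := by
    intro n y hy
    have h1 := (ha0 n).1
    have h2 := (ha0 n).2
    exact ⟨by linarith [hy.1], by linarith [hy.2]⟩
  have h0 : Tendsto (fun n : ℕ => ((n : ℝ) + 2)⁻¹) atTop (𝓝 0) :=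
    tendsto_inv_atTop_zero.comp (tendsto_atTop_add_const_right _ 2 tendsto_natCast_atTop_atTop)
  have hta : Tendsto a atTop (𝓝 1) := by
    simpa using tendsto_const_nhds.sub h0
  have htna : Tendsto (fun n => -(a n)) atTop (𝓝 (-1)) := hta.neg
  have hcover : AECover (volume.restrict (Ioo (-1:ℝ) 1)) atTop
      (fun n => Icc (-(a n)) (a n)) := aecover_Ioo_of_Icc htna hta
  have hfi : ∀ n, IntegrableOn f (Icc (-(a n)) (a n)) (volume.restrict (Ioo (-1:ℝ) 1)) := by
    intro n
    have h1 : IntegrableOn f (Icc (-(a n)) (a n)) volume :=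
      (hcf.mono (hsub n)).integrableOn_Icc
    rw [IntegrableOn, Measure.restrict_restrict measurableSet_Icc,
      Set.inter_eq_left.mpr (hsub n)]
    exact h1
  have heval : ∀ n, ∫ x in Icc (-(a n)) (a n), f x ∂(volume.restrict (Ioo (-1:ℝ) 1))
      = F (a n) - F (-(a n)) := by
    intro n
    have hle : -(a n) ≤ a n := by linarith [(ha0 n).1]
    rw [Measure.restrict_restrict measurableSet_Icc, Set.inter_eq_left.mpr (hsub n)]
    have h2 : ∫ x in Icc (-(a n)) (a n), f x = ∫ x in (-(a n))..(a n), f x := by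
      rw [intervalIntegral.integral_of_le hle, integral_Icc_eq_integral_Ioc]
    rw [h2]
    refine intervalIntegral.integral_eq_sub_of_hasDerivAt (fun y hy => hF y (hsub n ?_)) ?_
    · rwa [Set.uIcc_of_le hle] at hy
    · exact (hcf.mono (fun y hy => hsub n (by rwa [Set.uIcc_of_le hle] at hy))).intervalIntegrable
  have hlim : Tendsto (fun n => F (a n) - F (-(a n))) atTop (𝓝 (F 1 - F (-1))) :=
    ((hFc.tendsto 1).comp hta).sub ((hFc.tendsto (-1)).comp htna)
  exact hcover.integral_eq_of_tendsto_of_nonneg_ae (F 1 - F (-1))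
    (ae_of_all _ hnn) hfi (by simpa only [heval] using hlim)

lemma one_sub_sq_pos {x : ℝ} (hx : x ∈ Ioo (-1:ℝ) 1) : 0 < 1 - x ^ 2 := by
  have h1 := hx.1; have h2 := hx.2; nlinarith

lemma cont_f (n : ℕ) :
    ContinuousOn (fun t : ℝ => t ^ n / (Real.pi * Real.sqrt (1 - t ^ 2))) (Ioo (-1:ℝ) 1) := by
  apply ContinuousOn.div (continuous_pow n).continuousOn
  · exact (continuous_const.mul ((continuous_const.sub (continuous_pow 2)).sqrt)).continuousOn
  · intro t ht
    have := Real.sqrt_pos.2 (one_sub_sq_pos ht)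
    positivity

lemma hasDeriv2 : ∀ x ∈ Ioo (-1:ℝ) 1,
    HasDerivAt (fun y => (Real.arcsin y - y * Real.sqrt (1 - y ^ 2)) / (2 * Real.pi))
      (x ^ 2 / (Real.pi * Real.sqrt (1 - x ^ 2))) x := by
  intro x hx
  have h2 : 0 < 1 - x ^ 2 := one_sub_sq_pos hx
  have hs : 0 < Real.sqrt (1 - x ^ 2) := Real.sqrt_pos.2 h2
  have ha : HasDerivAt Real.arcsin (1 / Real.sqrt (1 - x ^ 2)) x :=
    Real.hasDerivAt_arcsin hx.1.ne' hx.2.ne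
  have hu : HasDerivAt (fun y : ℝ => 1 - y ^ 2) (-(2 * x)) x := by
    simpa using ((hasDerivAt_pow 2 x).const_sub 1)
  have hsq : HasDerivAt (fun y : ℝ => Real.sqrt (1 - y ^ 2))
      (1 / (2 * Real.sqrt (1 - x ^ 2)) * (-(2 * x))) x :=
    (Real.hasDerivAt_sqrt h2.ne').comp x hu
  have hmul : HasDerivAt (fun y : ℝ => y * Real.sqrt (1 - y ^ 2))
      (1 * Real.sqrt (1 - x ^ 2) + x * (1 / (2 * Real.sqrt (1 - x ^ 2)) * (-(2 * x)))) x :=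
    (hasDerivAt_id x).mul hsq
  have hF := (ha.sub hmul).div_const (2 * Real.pi)
  refine hF.congr_deriv ?_
  have hss : Real.sqrt (1 - x ^ 2) ^ 2 = 1 - x ^ 2 := Real.sq_sqrt h2.le
  field_simp
  linear_combination (-1) * hss

lemma arcsine_m2 : ∫ t, t ^ 2 ∂arcsineMeasure = 1 / 2 := by
  rw [arcsine_integral, rho_mul_pow_eq 2, integral_indicator measurableSet_Ioo,
    integral_Ioo_eval _ (fun y => (Real.arcsin y - y * Real.sqrt (1 - y ^ 2)) / (2 * Real.pi))
      (cont_f 2) (fun y => by positivity) hasDeriv2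
      (((Real.continuous_arcsin.sub (continuous_id.mul
        ((continuous_const.sub (continuous_pow 2)).sqrt))).div_const (2 * Real.pi)))]
  rw [Real.arcsin_one, Real.arcsin_neg, Real.arcsin_one]
  norm_num
  field_simp
  ring

lemma hasDeriv4 : ∀ x ∈ Ioo (-1:ℝ) 1,
    HasDerivAt (fun y => (3 * Real.arcsin y - (3 * y + 2 * y ^ 3) * Real.sqrt (1 - y ^ 2)) / (8 * Real.pi))
      (x ^ 4 / (Real.pi * Real.sqrt (1 - x ^ 2))) x := by
  intro x hx
  have h2 : 0 < 1 - x ^ 2 := one_sub_sq_pos hx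
  have hs : 0 < Real.sqrt (1 - x ^ 2) := Real.sqrt_pos.2 h2
  have ha : HasDerivAt (fun y => 3 * Real.arcsin y) (3 * (1 / Real.sqrt (1 - x ^ 2))) x :=
    (Real.hasDerivAt_arcsin hx.1.ne' hx.2.ne).const_mul 3
  have hu : HasDerivAt (fun y : ℝ => 1 - y ^ 2) (-(2 * x)) x := by
    simpa using ((hasDerivAt_pow 2 x).const_sub 1)
  have hsq : HasDerivAt (fun y : ℝ => Real.sqrt (1 - y ^ 2))
      (1 / (2 * Real.sqrt (1 - x ^ 2)) * (-(2 * x))) x :=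
    (Real.hasDerivAt_sqrt h2.ne').comp x hu
  have hpoly : HasDerivAt (fun y : ℝ => 3 * y + 2 * y ^ 3) (3 * 1 + 2 * (3 * x ^ 2)) x := by
    have := ((hasDerivAt_id x).const_mul 3).add ((hasDerivAt_pow 3 x).const_mul 2)
    exact this.congr_deriv (by norm_num)
  have hmul : HasDerivAt (fun y : ℝ => (3 * y + 2 * y ^ 3) * Real.sqrt (1 - y ^ 2))
      ((3 * 1 + 2 * (3 * x ^ 2)) * Real.sqrt (1 - x ^ 2)
        + (3 * x + 2 * x ^ 3) * (1 / (2 * Real.sqrt (1 - x ^ 2)) * (-(2 * x)))) x :=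
    hpoly.mul hsq
  have hF := (ha.sub hmul).div_const (8 * Real.pi)
  refine hF.congr_deriv ?_
  have hss : Real.sqrt (1 - x ^ 2) ^ 2 = 1 - x ^ 2 := Real.sq_sqrt h2.le
  field_simp
  ring_nf
  linear_combination (-3 * (1 + 2 * x ^ 2)) * hss

lemma arcsine_m4 : ∫ t, t ^ 4 ∂arcsineMeasure = 3 / 8 := by
  rw [arcsine_integral, rho_mul_pow_eq 4, integral_indicator measurableSet_Ioo,
    integral_Ioo_eval _ (fun y => (3 * Real.arcsin y - (3 * y + 2 * y ^ 3) * Real.sqrt (1 - y ^ 2)) / (8 * Real.pi))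
      (cont_f 4) (fun y => by positivity) hasDeriv4
      ((((continuous_const.mul Real.continuous_arcsin).sub
        (((continuous_const.mul continuous_id).add (continuous_const.mul (continuous_pow 3))).mul
        ((continuous_const.sub (continuous_pow 2)).sqrt))).div_const (8 * Real.pi)))]
  rw [Real.arcsin_one, Real.arcsin_neg, Real.arcsin_one]
  norm_num
  field_simp
  ring

lemma arcsine_ae_bound : ∀ᵐ t ∂arcsineMeasure, |t| ≤ 1 := by
  rw [ae_iff]
  have hs : MeasurableSet {t : ℝ | ¬ |t| ≤ 1} := by
    simp only [not_le]
    exact measurableSet_lt measurable_const (by fun_prop)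
  rw [arcsineMeasure, withDensity_apply _ hs]
  rw [setLIntegral_congr_fun hs (fun t ht => ?_)]
  · exact lintegral_zero
  · have : ¬ |t| < 1 := fun h => ht (le_of_lt h)
    simp [this]

lemma rademacher_ae : ∀ᵐ t ∂rademacherMeasure, t = -1 ∨ t = 1 := by
  rw [ae_iff]
  have hs : MeasurableSet {t : ℝ | ¬(t = -1 ∨ t = 1)} := by
    apply MeasurableSet.compl
    exact (measurableSet_singleton (-1)).union (measurableSet_singleton 1)
  rw [rademacherMeasure, Measure.add_apply, Measure.smul_apply, Measure.smul_apply,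
    Measure.dirac_apply' _ hs, Measure.dirac_apply' _ hs]
  simp


/-- harvested DC of Y = (1+d)·Σ x_k (DCSK correlator output, no
fading): ε₁E[Y²] + ε₂E[Y⁴] = ε₁β + 3ε₂β(2β−1). -/
theorem stmt_3 {Ω : Type*} [MeasurableSpace Ω] (P : Measure Ω) [IsProbabilityMeasure P]
    (β : ℕ) (hβ : 0 < β)
    (x : Fin β → Ω → ℝ) (d : Ω → ℝ)
    (hxmeas : ∀ k, Measurable (x k)) (hdmeas : Measurable d)
    (hxlaw : ∀ k, Measure.map (x k) P = arcsineMeasure)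
    (hdlaw : Measure.map d P = rademacherMeasure)
    (hindep : iIndepFun
      (fun i : Option (Fin β) => i.elim d x) P)
    (Y : Ω → ℝ) (hY : Y = fun ω => (1 + d ω) * ∑ k, x k ω)
    (ε₁ ε₂ : ℝ) :
    ε₁ * (∫ ω, Y ω ^ 2 ∂P) + ε₂ * (∫ ω, Y ω ^ 4 ∂P)
      = ε₁ * (β : ℝ) + 3 * ε₂ * (β : ℝ) * (2 * (β : ℝ) - 1) := by

  classical
  have hFmeas : ∀ i : Option (Fin β), Measurable ((fun i : Option (Fin β) => i.elim d x) i) := by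
    rintro (_ | k)
    exacts [hdmeas, hxmeas k]
  -- moments of the x k
  have momP : ∀ (k : Fin β) (n : ℕ), ∫ ω, x k ω ^ n ∂P = ∫ t, t ^ n ∂arcsineMeasure := by
    intro k n
    rw [← hxlaw k, integral_map (hxmeas k).aemeasurable (by fun_prop)]
  have mom1 : ∀ k, ∫ ω, x k ω ^ 1 ∂P = 0 := fun k => by
    rw [momP, arcsine_moment_odd 1 (by norm_num)]
  have mom2 : ∀ k, ∫ ω, x k ω ^ 2 ∂P = 1 / 2 := fun k => by rw [momP, arcsine_m2]
  have mom3 : ∀ k, ∫ ω, x k ω ^ 3 ∂P = 0 := fun k => by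
    rw [momP, arcsine_moment_odd 3 (by decide)]
  have mom4 : ∀ k, ∫ ω, x k ω ^ 4 ∂P = 3 / 8 := fun k => by rw [momP, arcsine_m4]
  -- a.e. bounds
  have hxb : ∀ᵐ ω ∂P, ∀ k, |x k ω| ≤ 1 := by
    rw [ae_all_iff]
    intro k
    have h1 : ∀ᵐ t ∂(Measure.map (x k) P), |t| ≤ 1 := by
      rw [hxlaw k]; exact arcsine_ae_bound
    exact (ae_map_iff (hxmeas k).aemeasurable
      (measurableSet_le (by fun_prop) measurable_const)).1 h1
  have hdb : ∀ᵐ ω ∂P, d ω = -1 ∨ d ω = 1 := by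
    have h1 : ∀ᵐ t ∂(Measure.map d P), t = -1 ∨ t = 1 := by
      rw [hdlaw]; exact rademacher_ae
    exact (ae_map_iff hdmeas.aemeasurable
      (((measurableSet_singleton (-1)).union (measurableSet_singleton 1)))).1 h1
  -- integrability helper
  have integ : ∀ (g : Ω → ℝ) (C : ℝ), Measurable g → (∀ᵐ ω ∂P, |g ω| ≤ C) → Integrable g P :=
    fun g C hm hb => (integrable_const C).mono' hm.aestronglyMeasurable
      (by simpa [Real.norm_eq_abs] using hb)
  -- sum bounds and integrability
  have hSb : ∀ s : Finset (Fin β), ∀ᵐ ω ∂P, |∑ i ∈ s, x i ω| ≤ (s.card : ℝ) := by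
    intro s
    refine hxb.mono fun ω h => ?_
    calc |∑ i ∈ s, x i ω| ≤ ∑ i ∈ s, |x i ω| := Finset.abs_sum_le_sum_abs _ _
      _ ≤ ∑ _i ∈ s, (1:ℝ) := Finset.sum_le_sum fun i _ => h i
      _ = (s.card : ℝ) := by simp
  have intS : ∀ (s : Finset (Fin β)) (n : ℕ), Integrable (fun ω => (∑ i ∈ s, x i ω) ^ n) P := by
    intro s n
    refine integ _ ((s.card : ℝ) ^ n) (by fun_prop) ((hSb s).mono fun ω h => ?_)
    rw [abs_pow]
    exact pow_le_pow_left₀ (abs_nonneg _) h n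
  have intx : ∀ (k : Fin β) (m : ℕ), Integrable (fun ω => x k ω ^ m) P := by
    intro k m
    refine integ _ 1 (by fun_prop) (hxb.mono fun ω h => ?_)
    rw [abs_pow]
    exact pow_le_one₀ (abs_nonneg _) (h k)
  have intxS : ∀ (k : Fin β) (m : ℕ) (s : Finset (Fin β)) (n : ℕ),
      Integrable (fun ω => x k ω ^ m * (∑ i ∈ s, x i ω) ^ n) P := by
    intro k m s n
    refine integ _ ((s.card : ℝ) ^ n) (by fun_prop) ((hxb.and (hSb s)).mono fun ω h => ?_)
    rw [abs_mul, abs_pow, abs_pow]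
    calc |x k ω| ^ m * |∑ i ∈ s, x i ω| ^ n
        ≤ 1 * ((s.card : ℝ)) ^ n := by
          gcongr
          · exact pow_le_one₀ (abs_nonneg _) (h.1 k)
          · exact h.2
      _ = ((s.card : ℝ)) ^ n := one_mul _
  -- product of integrals helper
  have mul_int : ∀ (f g : Ω → ℝ), IndepFun f g P → Integrable f P → Integrable g P →
      ∫ ω, f ω * g ω ∂P = (∫ ω, f ω ∂P) * ∫ ω, g ω ∂P := by
    intro f g h hf hg
    have := h.integral_mul_eq_mul_integral hf.aestronglyMeasurable hg.aestronglyMeasurable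
    simpa [Pi.mul_apply] using this
  -- independence of sums and entries
  have hsum_eq : ∀ s : Finset (Fin β),
      (∑ j ∈ s.image some, (fun i : Option (Fin β) => i.elim d x) j)
        = fun ω => ∑ i ∈ s, x i ω := by
    intro s
    funext ω
    rw [Finset.sum_apply, Finset.sum_image (fun _ _ _ _ h => Option.some_injective _ h)]
    rfl
  have hSxk : ∀ (s : Finset (Fin β)) (k : Fin β), k ∉ s →
      IndepFun (fun ω => ∑ i ∈ s, x i ω) (x k) P := by
    intro s k hk
    have h := hindep.indepFun_finset_sum_of_notMem hFmeas
      (s := s.image some) (i := some k) (by simp [hk])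
    rw [hsum_eq] at h
    exact h
  have fact : ∀ (s : Finset (Fin β)) (k : Fin β), k ∉ s → ∀ (m n : ℕ),
      ∫ ω, x k ω ^ m * (∑ i ∈ s, x i ω) ^ n ∂P
        = (∫ ω, x k ω ^ m ∂P) * ∫ ω, (∑ i ∈ s, x i ω) ^ n ∂P := by
    intro s k hk m n
    exact mul_int _ _ (((hSxk s k hk).symm).comp
      (by fun_prop : Measurable fun t : ℝ => t ^ m)
      (by fun_prop : Measurable fun t : ℝ => t ^ n)) (intx k m) (intS s n)
  -- the key induction on moments of partial sums
  have key : ∀ s : Finset (Fin β),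
      (∫ ω, (∑ i ∈ s, x i ω) ^ 1 ∂P) = 0 ∧
      (∫ ω, (∑ i ∈ s, x i ω) ^ 2 ∂P) = (s.card : ℝ) / 2 ∧
      (∫ ω, (∑ i ∈ s, x i ω) ^ 4 ∂P)
        = 3 * (s.card : ℝ) * (2 * (s.card : ℝ) - 1) / 8 := by
    intro s
    induction s using Finset.induction_on with
    | empty => norm_num
    | insert _ _ hk ih =>
      rename_i k s
      obtain ⟨ih1, ih2, ih4⟩ := ih
      have hrw : ∀ ω, ∑ i ∈ insert k s, x i ω = x k ω + ∑ i ∈ s, x i ω :=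
        fun ω => Finset.sum_insert hk
      have hcard : ((insert k s).card : ℝ) = (s.card : ℝ) + 1 := by
        rw [Finset.card_insert_of_notMem hk]; push_cast; ring
      have e1 : (∫ ω, (∑ i ∈ insert k s, x i ω) ^ 1 ∂P) = 0 := by
        have : (fun ω => (∑ i ∈ insert k s, x i ω) ^ 1)
            = fun ω => x k ω ^ 1 + (∑ i ∈ s, x i ω) ^ 1 := by
          funext ω; rw [hrw ω]; ring
        rw [this, integral_add (intx k 1) (intS s 1), mom1, ih1, add_zero]
      have e2 : (∫ ω, (∑ i ∈ insert k s, x i ω) ^ 2 ∂P)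
          = ((insert k s).card : ℝ) / 2 := by
        have h : (fun ω => (∑ i ∈ insert k s, x i ω) ^ 2)
            = fun ω => x k ω ^ 2 + (2 * (x k ω ^ 1 * (∑ i ∈ s, x i ω) ^ 1)
              + (∑ i ∈ s, x i ω) ^ 2) := by
          funext ω; rw [hrw ω]; ring
        have i1 : Integrable (fun ω => 2 * (x k ω ^ 1 * (∑ i ∈ s, x i ω) ^ 1)
            + (∑ i ∈ s, x i ω) ^ 2) P := ((intxS k 1 s 1).const_mul 2).add (intS s 2)
        rw [h, integral_add (intx k 2) i1,
          integral_add ((intxS k 1 s 1).const_mul 2) (intS s 2),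
          integral_const_mul _ _, fact s k hk 1 1, mom1, mom2, ih2, hcard]
        ring
      have e4 : (∫ ω, (∑ i ∈ insert k s, x i ω) ^ 4 ∂P)
          = 3 * ((insert k s).card : ℝ) * (2 * ((insert k s).card : ℝ) - 1) / 8 := by
        have h : (fun ω => (∑ i ∈ insert k s, x i ω) ^ 4)
            = fun ω => x k ω ^ 4 + (4 * (x k ω ^ 3 * (∑ i ∈ s, x i ω) ^ 1)
              + (6 * (x k ω ^ 2 * (∑ i ∈ s, x i ω) ^ 2)
              + (4 * (x k ω ^ 1 * (∑ i ∈ s, x i ω) ^ 3)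
              + (∑ i ∈ s, x i ω) ^ 4))) := by
          funext ω; rw [hrw ω]; ring
        have i3 : Integrable (fun ω => 4 * (x k ω ^ 1 * (∑ i ∈ s, x i ω) ^ 3)
            + (∑ i ∈ s, x i ω) ^ 4) P := ((intxS k 1 s 3).const_mul 4).add (intS s 4)
        have i2 : Integrable (fun ω => 6 * (x k ω ^ 2 * (∑ i ∈ s, x i ω) ^ 2)
            + (4 * (x k ω ^ 1 * (∑ i ∈ s, x i ω) ^ 3) + (∑ i ∈ s, x i ω) ^ 4)) P :=
          ((intxS k 2 s 2).const_mul 6).add i3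
        have i1 : Integrable (fun ω => 4 * (x k ω ^ 3 * (∑ i ∈ s, x i ω) ^ 1)
            + (6 * (x k ω ^ 2 * (∑ i ∈ s, x i ω) ^ 2)
            + (4 * (x k ω ^ 1 * (∑ i ∈ s, x i ω) ^ 3) + (∑ i ∈ s, x i ω) ^ 4))) P :=
          ((intxS k 3 s 1).const_mul 4).add i2
        rw [h, integral_add (intx k 4) i1,
          integral_add ((intxS k 3 s 1).const_mul 4) i2,
          integral_add ((intxS k 2 s 2).const_mul 6) i3,
          integral_add ((intxS k 1 s 3).const_mul 4) (intS s 4),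
          integral_const_mul _ _, integral_const_mul _ _, integral_const_mul _ _,
          fact s k hk 3 1, fact s k hk 2 2, fact s k hk 1 3,
          mom1, mom2, mom3, mom4, ih2, ih4, hcard]
        ring
      exact ⟨e1, e2, e4⟩
  -- moments of (1 + d)
  have hdmom : ∀ n : ℕ, 0 < n → ∫ ω, (1 + d ω) ^ n ∂P = 2 ^ n / 2 := by
    intro n hn
    have hmap : ∫ ω, (1 + d ω) ^ n ∂P = ∫ t, (1 + t) ^ n ∂rademacherMeasure := by
      rw [← hdlaw, integral_map hdmeas.aemeasurable ((by fun_prop : Measurable fun t : ℝ => (1 + t) ^ n)).aestronglyMeasurable]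
    have hdint : ∀ c : ℝ, Integrable (fun t : ℝ => (1 + t) ^ n) (Measure.dirac c) := by
      intro c
      refine ⟨(by fun_prop : Measurable fun t : ℝ => (1 + t) ^ n).aestronglyMeasurable, ?_⟩
      rw [HasFiniteIntegral, lintegral_dirac' _ (by fun_prop)]
      exact ENNReal.coe_lt_top
    rw [hmap, rademacherMeasure,
      integral_add_measure ((hdint (-1)).smul_measure (by norm_num))
        ((hdint 1).smul_measure (by norm_num)),
      integral_smul_measure, integral_smul_measure, integral_dirac, integral_dirac]
    norm_num [zero_pow hn.ne']
    ring
  -- independence of (1 + d) and the full sum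
  have hdS : IndepFun d (fun ω => ∑ i, x i ω) P := by
    have h := hindep.indepFun_finset_sum_of_notMem hFmeas
      (s := Finset.univ.image some) (i := (none : Option (Fin β))) (by simp)
    rw [hsum_eq] at h
    exact h.symm
  have intd : ∀ n : ℕ, Integrable (fun ω => (1 + d ω) ^ n) P := by
    intro n
    refine integ _ (2 ^ n) (by fun_prop) (hdb.mono fun ω h => ?_)
    rw [abs_pow]
    have : |1 + d ω| ≤ 2 := by rcases h with h | h <;> rw [h] <;> norm_num
    exact pow_le_pow_left₀ (abs_nonneg _) this n
  have hprod : ∀ n : ℕ, ∫ ω, (1 + d ω) ^ n * (∑ i, x i ω) ^ n ∂P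
      = (∫ ω, (1 + d ω) ^ n ∂P) * ∫ ω, (∑ i, x i ω) ^ n ∂P := by
    intro n
    exact mul_int _ _ (hdS.comp (by fun_prop : Measurable fun t : ℝ => (1 + t) ^ n)
      (by fun_prop : Measurable fun t : ℝ => t ^ n)) (intd n) (intS Finset.univ n)
  -- put everything together
  obtain ⟨-, k2, k4⟩ := key Finset.univ
  have hcardu : ((Finset.univ : Finset (Fin β)).card : ℝ) = (β : ℝ) := by
    rw [Finset.card_univ, Fintype.card_fin]
  rw [hcardu] at k2 k4
  have hY2 : ∫ ω, Y ω ^ 2 ∂P = (β : ℝ) := by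
    have h : (fun ω => Y ω ^ 2) = fun ω => (1 + d ω) ^ 2 * (∑ i, x i ω) ^ 2 := by
      funext ω; rw [hY]; ring
    rw [h, hprod 2, hdmom 2 (by norm_num), k2]
    ring
  have hY4 : ∫ ω, Y ω ^ 4 ∂P = 3 * (β : ℝ) * (2 * (β : ℝ) - 1) := by
    have h : (fun ω => Y ω ^ 4) = fun ω => (1 + d ω) ^ 4 * (∑ i, x i ω) ^ 4 := by
      funext ω; rw [hY]; ring
    rw [h, hprod 4, hdmom 4 (by norm_num), k4]
    ring
  rw [hY2, hY4]
  ring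
end

section
/- Let β be a positive integer and m ≥ 1 a real number. Let x be an arcsine-distributed random variable, d uniform on {−1,+1}, and h a Nakagami-m amplitude, all mutually independent. Let Y = h·d·β·x (the correlator output of the β_r = 0 SR-DCSK symbol consisting of β identical chips d·x). Then for any reals ε₁, ε₂, the harvested DC satisfies ε₁·E[Y²] + ε₂·E[Y⁴] = (1/2)·ε₁·β² + (3(1+m)/(8m))·ε₂·β⁴. -/
open MeasureTheory ProbabilityTheory
open scoped ENNReal

/-- The distribution of a unit-mean-power Nakagami-m amplitude, with density
2 m^m z^{2m−1} e^{−m z²}/Γ(m) for z ≥ 0 and 0 otherwise. -/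
noncomputable def nakagamiMeasure (m : ℝ) : Measure ℝ :=
  volume.withDensity fun z =>
    ENNReal.ofReal (if 0 ≤ z then
      2 * m ^ m * z ^ (2 * m - 1) * Real.exp (-m * z ^ 2) / Real.Gamma m else 0)

open Set Real

lemma arcsine_moment (k : ℕ) :
    ∫ t, t ^ k ∂arcsineMeasure = (∫ θ in (-(π/2))..(π/2), Real.sin θ ^ k) / π := by
  have hπ : (0:ℝ) < π := Real.pi_pos
  set ρ : ℝ → ℝ := fun t => if |t| < 1 then 1 / (Real.pi * Real.sqrt (1 - t ^ 2)) else 0 with hρ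
  have hρnn : ∀ t, 0 ≤ ρ t := by
    intro t; simp only [hρ]; split
    · positivity
    · exact le_refl _
  have hρmeas : Measurable fun t => (ρ t).toNNReal := by
    apply Measurable.real_toNNReal
    apply Measurable.ite
    · exact measurableSet_lt measurable_id.abs measurable_const
    · exact (measurable_const.mul ((measurable_const.sub (measurable_id.pow_const 2)).sqrt)).const_div 1
    · exact measurable_const
  have h1 : ∫ t, t ^ k ∂arcsineMeasure = ∫ t, ρ t * t ^ k := by
    rw [arcsineMeasure]
    have : (fun t : ℝ => ENNReal.ofReal (ρ t)) = fun t => ((ρ t).toNNReal : ℝ≥0∞) := rfl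
    rw [this, integral_withDensity_eq_integral_smul hρmeas]
    congr 1; ext t
    simp [NNReal.smul_def, Real.coe_toNNReal _ (hρnn t)]
  have h2 : ∫ t, ρ t * t ^ k = ∫ t in Ioo (-1:ℝ) 1, ρ t * t ^ k := by
    symm
    apply setIntegral_eq_integral_of_forall_compl_eq_zero
    intro t ht
    have : ¬ |t| < 1 := by
      simp only [mem_Ioo, not_and_or, not_lt] at ht
      rw [not_lt, le_abs]
      rcases ht with h | h
      · right; linarith
      · left; exact h
    simp [hρ, this]
  have himg : Real.sin '' Ioo (-(π/2)) (π/2) = Ioo (-1:ℝ) 1 := by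
    ext y
    constructor
    · rintro ⟨θ, hθ, rfl⟩
      have h1' := Real.strictMonoOn_sin (left_mem_Icc.mpr (by linarith)) ⟨hθ.1.le, hθ.2.le⟩ hθ.1
      have h2' := Real.strictMonoOn_sin ⟨hθ.1.le, hθ.2.le⟩ (right_mem_Icc.mpr (by linarith)) hθ.2
      simp only [Real.sin_neg, Real.sin_pi_div_two] at h1' h2'
      exact ⟨h1', h2'⟩
    · intro hy
      refine ⟨Real.arcsin y, ⟨?_, ?_⟩, Real.sin_arcsin hy.1.le hy.2.le⟩
      · exact Real.neg_pi_div_two_lt_arcsin.mpr hy.1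
      · exact Real.arcsin_lt_pi_div_two.mpr hy.2
  have h3 : ∫ t in Ioo (-1:ℝ) 1, ρ t * t ^ k
      = ∫ θ in Ioo (-(π/2)) (π/2), Real.sin θ ^ k / π := by
    rw [← himg]
    rw [integral_image_eq_integral_abs_deriv_smul measurableSet_Ioo
      (fun θ _ => (Real.hasDerivAt_sin θ).hasDerivWithinAt)
      (Real.strictMonoOn_sin.injOn.mono Ioo_subset_Icc_self)]
    apply setIntegral_congr_fun measurableSet_Ioo
    intro θ hθ
    have hcos : 0 < Real.cos θ := Real.cos_pos_of_mem_Ioo hθ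
    have hsin : |Real.sin θ| < 1 := by
      rw [abs_lt]
      have h1' := Real.strictMonoOn_sin (left_mem_Icc.mpr (by linarith [hθ.1, hθ.2])) ⟨hθ.1.le, hθ.2.le⟩ hθ.1
      have h2' := Real.strictMonoOn_sin ⟨hθ.1.le, hθ.2.le⟩ (right_mem_Icc.mpr (by linarith [hθ.1, hθ.2])) hθ.2
      simp only [Real.sin_neg, Real.sin_pi_div_two] at h1' h2'
      exact ⟨h1', h2'⟩
    have hsq : 1 - Real.sin θ ^ 2 = Real.cos θ ^ 2 := by
      have := Real.sin_sq_add_cos_sq θ; linarith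
    simp only [hρ, if_pos hsin, smul_eq_mul, abs_of_pos hcos, hsq,
      Real.sqrt_sq hcos.le]
    field_simp
  rw [h1, h2, h3]
  rw [← integral_Ioc_eq_integral_Ioo, ← intervalIntegral.integral_of_le (by linarith)]
  rw [intervalIntegral.integral_div]

lemma arcsine_sq : ∫ t, t ^ 2 ∂arcsineMeasure = 1/2 := by
  rw [arcsine_moment, integral_sin_sq]
  simp [Real.pi_ne_zero]
  field_simp

lemma arcsine_p4 : ∫ t, t ^ 4 ∂arcsineMeasure = 3/8 := by
  rw [arcsine_moment]
  have := integral_sin_pow 2 (a := -(π/2)) (b := π/2)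
  norm_num at this
  rw [(by norm_num : (4:ℕ) = 2 + 2), this]
  field_simp
  ring

lemma nakagami_moment (m : ℝ) (hm : 1 ≤ m) (j : ℕ) :
    ∫ t, t ^ (2*j) ∂nakagamiMeasure m
      = m ^ m * ((1/m) ^ (m + (j:ℝ)) * Real.Gamma (m + (j:ℝ))) / Real.Gamma m := by
  have hm0 : (0:ℝ) < m := by linarith
  have hΓ : 0 < Real.Gamma m := Real.Gamma_pos_of_pos hm0
  set ρ : ℝ → ℝ := fun z => if 0 ≤ z then
      2 * m ^ m * z ^ (2 * m - 1) * Real.exp (-m * z ^ 2) / Real.Gamma m else 0 with hρ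
  have hρnn : ∀ z, 0 ≤ ρ z := by
    intro z; simp only [hρ]; split
    · have h1 : (0:ℝ) ≤ z ^ (2*m-1) := Real.rpow_nonneg (by assumption) _
      have h2 : (0:ℝ) < m ^ m := Real.rpow_pos_of_pos hm0 m
      positivity
    · exact le_refl _
  have hρmeas : Measurable fun z => (ρ z).toNNReal := by
    apply Measurable.real_toNNReal
    apply Measurable.ite
    · exact measurableSet_le measurable_const measurable_id
    · have hr : Measurable fun z : ℝ => z ^ (2*m-1) :=
        (Real.continuous_rpow_const (by linarith)).measurable
      exact ((hr.const_mul (2 * m ^ m)).mul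
        ((measurable_id.pow_const 2).const_mul (-m)).exp).div_const _
    · exact measurable_const
  have h1 : ∫ t, t ^ (2*j) ∂nakagamiMeasure m = ∫ t, ρ t * t ^ (2*j) := by
    rw [nakagamiMeasure]
    have : (fun t : ℝ => ENNReal.ofReal (ρ t)) = fun t => ((ρ t).toNNReal : ℝ≥0∞) := rfl
    rw [this, integral_withDensity_eq_integral_smul hρmeas]
    congr 1; ext t
    simp [NNReal.smul_def, Real.coe_toNNReal _ (hρnn t)]
  have h2 : ∫ t, ρ t * t ^ (2*j) = ∫ t in Ioi (0:ℝ), ρ t * t ^ (2*j) := by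
    symm
    apply setIntegral_eq_integral_of_forall_compl_eq_zero
    intro t ht
    simp only [mem_Ioi, not_lt] at ht
    rcases lt_or_eq_of_le ht with h | h
    · simp [hρ, not_le.mpr h]
    · subst h
      simp [hρ, Real.zero_rpow (by linarith : 2*m-1 ≠ 0)]
  set g : ℝ → ℝ := fun u => u ^ (m + (j:ℝ) - 1) * Real.exp (-(m * u)) with hg
  have h3 : ∫ t in Ioi (0:ℝ), ρ t * t ^ (2*j)
      = (m ^ m / Real.Gamma m) * ∫ x in Ioi (0:ℝ), (2 * x ^ ((2:ℝ)-1)) • g (x ^ (2:ℝ)) := by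
    rw [← integral_const_mul]
    apply setIntegral_congr_fun measurableSet_Ioi
    intro x hx
    have hx0 : (0:ℝ) < x := hx
    have e2 : x ^ (2:ℝ) = x ^ (2:ℕ) := by
      rw [← Real.rpow_natCast x 2]; norm_num
    simp only [hρ, if_pos hx0.le, smul_eq_mul, hg]
    rw [← Real.rpow_natCast x (2*j), ← Real.rpow_mul hx0.le, e2]
    rw [(by norm_num : (2:ℝ) - 1 = 1), Real.rpow_one]
    rw [(by push_cast; ring : ((2*j:ℕ):ℝ) = 2*(j:ℝ))]
    have key : x ^ (2*m-1) * x ^ (2*(j:ℝ)) = x * x ^ (2*(m+(j:ℝ)-1)) := by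
      rw [← Real.rpow_add hx0, mul_comm x, ← Real.rpow_add_one hx0.ne']
      ring_nf
    simp only [neg_mul]
    calc 2 * m ^ m * x ^ (2*m-1) * Real.exp (-(m * x^2)) / Real.Gamma m * x ^ (2*(j:ℝ))
        = (x ^ (2*m-1) * x ^ (2*(j:ℝ))) * (2 * m ^ m * Real.exp (-(m * x^2))) / Real.Gamma m := by
          ring
      _ = (x * x ^ (2*(m+(j:ℝ)-1))) * (2 * m ^ m * Real.exp (-(m * x^2))) / Real.Gamma m := by
          rw [key]
      _ = m ^ m / Real.Gamma m * (2 * x * (x ^ (2 * (m + (j:ℝ) - 1)) * Real.exp (-(m * x ^ 2)))) := by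
          ring
  rw [h1, h2, h3]
  have h4 : ∫ x in Ioi (0:ℝ), (2 * x ^ ((2:ℝ)-1)) • g (x ^ (2:ℝ)) = ∫ u in Ioi (0:ℝ), g u :=
    integral_comp_rpow_Ioi_of_pos (by norm_num)
  rw [h4]
  have h5 : ∫ u in Ioi (0:ℝ), g u = (1/m) ^ (m + (j:ℝ)) * Real.Gamma (m + (j:ℝ)) := by
    rw [hg]
    exact Real.integral_rpow_mul_exp_neg_mul_Ioi (by positivity) hm0
  rw [h5]
  ring

lemma nakagami_sq (m : ℝ) (hm : 1 ≤ m) : ∫ t, t ^ 2 ∂nakagamiMeasure m = 1 := by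
  have hm0 : (0:ℝ) < m := by linarith
  have hΓ : 0 < Real.Gamma m := Real.Gamma_pos_of_pos hm0
  have hmm : (0:ℝ) < m ^ m := Real.rpow_pos_of_pos hm0 m
  have e := nakagami_moment m hm 1
  norm_num at e
  rw [e, Real.inv_rpow hm0.le, Real.rpow_add hm0, Real.rpow_one,
    Real.Gamma_add_one hm0.ne']
  field_simp

lemma nakagami_p4 (m : ℝ) (hm : 1 ≤ m) :
    ∫ t, t ^ 4 ∂nakagamiMeasure m = (1 + m) / m := by
  have hm0 : (0:ℝ) < m := by linarith
  have hΓ : 0 < Real.Gamma m := Real.Gamma_pos_of_pos hm0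
  have hmm : (0:ℝ) < m ^ m := Real.rpow_pos_of_pos hm0 m
  have e := nakagami_moment m hm 2
  norm_num at e
  rw [e, Real.inv_rpow hm0.le, Real.rpow_add hm0,
    (by norm_num : (2:ℝ) = (2:ℕ)), Real.rpow_natCast,
    (by push_cast; ring : m + ((2:ℕ):ℝ) = (m+1)+1), Real.Gamma_add_one (by linarith),
    Real.Gamma_add_one hm0.ne']
  field_simp
  ring

lemma rademacher_even (k : ℕ) (hk : Even k) : ∫ t, t ^ k ∂rademacherMeasure = 1 := by
  have hint : ∀ a : ℝ, Integrable (fun t : ℝ => t ^ k) (Measure.dirac a) := by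
    intro a
    apply (integrable_const (a ^ k)).congr
    rw [Filter.eventuallyEq_comm, Filter.EventuallyEq, MeasureTheory.ae_dirac_eq]
    simp
  rw [rademacherMeasure, integral_add_measure ((hint _).smul_measure (by norm_num))
    ((hint _).smul_measure (by norm_num)), integral_smul_measure, integral_smul_measure,
    integral_dirac, integral_dirac, hk.neg_pow]
  norm_num


/-- harvested DC of the correlator output Y = h·d·β·x of the
β_r = 0 SR-DCSK symbol (β identical chips d·x) over a Nakagami-m channel:
ε₁E[Y²] + ε₂E[Y⁴] = (1/2)ε₁β² + (3(1+m)/(8m))ε₂β⁴. -/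
theorem stmt_11 {Ω : Type*} [MeasurableSpace Ω] (P : Measure Ω) [IsProbabilityMeasure P]
    (β : ℕ) (hβ : 0 < β) (m : ℝ) (hm : 1 ≤ m)
    (x d h : Ω → ℝ)
    (hxmeas : Measurable x) (hdmeas : Measurable d) (hhmeas : Measurable h)
    (hxlaw : Measure.map x P = arcsineMeasure)
    (hdlaw : Measure.map d P = rademacherMeasure)
    (hhlaw : Measure.map h P = nakagamiMeasure m)
    (hindep : iIndepFun ![x, d, h] P)
    (Y : Ω → ℝ) (hY : Y = fun ω => h ω * d ω * (β : ℝ) * x ω)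
    (ε₁ ε₂ : ℝ) :
    ε₁ * (∫ ω, Y ω ^ 2 ∂P) + ε₂ * (∫ ω, Y ω ^ 4 ∂P)
      = (1 / 2) * ε₁ * (β : ℝ) ^ 2 + (3 * (1 + m) / (8 * m)) * ε₂ * (β : ℝ) ^ 4 := by
  have hm0 : (0:ℝ) < m := by linarith
  have hmall : ∀ i, Measurable (![x, d, h] i) := by
    intro i; fin_cases i <;> simpa
  have hdh : IndepFun d h P := by
    have := hindep.indepFun (show (1:Fin 3) ≠ 2 by decide)
    simpa using this
  have hprod : IndepFun (fun ω => d ω * h ω) x P := by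
    have := hindep.indepFun_finsetProd_of_notMem hmall
      (s := {1, 2}) (i := 0) (by decide)
    have hps : ∏ j ∈ ({1, 2} : Finset (Fin 3)), ![x, d, h] j = fun ω => d ω * h ω := by
      rw [Finset.prod_pair (by decide : (1:Fin 3) ≠ 2)]
      ext ω; simp
    rw [hps] at this
    simpa using this
  -- moment transfer
  have hxk : ∀ k : ℕ, ∫ ω, x ω ^ k ∂P = ∫ t, t ^ k ∂arcsineMeasure := by
    intro k
    rw [← hxlaw, integral_map hxmeas.aemeasurable
      (show AEStronglyMeasurable (fun t : ℝ => t ^ k) (Measure.map x P) from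
        (measurable_id.pow_const k).aestronglyMeasurable)]
  have hdk : ∀ k : ℕ, ∫ ω, d ω ^ k ∂P = ∫ t, t ^ k ∂rademacherMeasure := by
    intro k
    rw [← hdlaw, integral_map hdmeas.aemeasurable
      (show AEStronglyMeasurable (fun t : ℝ => t ^ k) (Measure.map d P) from
        (measurable_id.pow_const k).aestronglyMeasurable)]
  have hhk : ∀ k : ℕ, ∫ ω, h ω ^ k ∂P = ∫ t, t ^ k ∂nakagamiMeasure m := by
    intro k
    rw [← hhlaw, integral_map hhmeas.aemeasurable
      (show AEStronglyMeasurable (fun t : ℝ => t ^ k) (Measure.map h P) from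
        (measurable_id.pow_const k).aestronglyMeasurable)]
  have hYk : ∀ k : ℕ, ∫ ω, Y ω ^ k ∂P
      = (β:ℝ) ^ k * ((∫ ω, d ω ^ k ∂P) * (∫ ω, h ω ^ k ∂P) * (∫ ω, x ω ^ k ∂P)) := by
    intro k
    have hik : IndepFun ((fun t : ℝ => t ^ k) ∘ fun ω => d ω * h ω)
        ((fun t : ℝ => t ^ k) ∘ x) P :=
      hprod.comp (measurable_id.pow_const k) (measurable_id.pow_const k)
    have hidk : IndepFun ((fun t : ℝ => t ^ k) ∘ d) ((fun t : ℝ => t ^ k) ∘ h) P :=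
      hdh.comp (measurable_id.pow_const k) (measurable_id.pow_const k)
    have e1 : ∫ ω, Y ω ^ k ∂P = (β:ℝ) ^ k * ∫ ω, (d ω * h ω) ^ k * x ω ^ k ∂P := by
      rw [← integral_const_mul]
      congr 1; ext ω
      rw [hY]
      ring
    have e2 : ∫ ω, (d ω * h ω) ^ k * x ω ^ k ∂P
        = (∫ ω, (d ω * h ω) ^ k ∂P) * ∫ ω, x ω ^ k ∂P := by
      have := hik.integral_mul_eq_mul_integral
        ((hdmeas.mul hhmeas).pow_const k).aestronglyMeasurable
        (hxmeas.pow_const k).aestronglyMeasurable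
      simpa [Function.comp] using this
    have e3 : ∫ ω, (d ω * h ω) ^ k ∂P = (∫ ω, d ω ^ k ∂P) * ∫ ω, h ω ^ k ∂P := by
      have := hidk.integral_mul_eq_mul_integral
        (hdmeas.pow_const k).aestronglyMeasurable
        (hhmeas.pow_const k).aestronglyMeasurable
      simpa [Function.comp, mul_pow] using this
    rw [e1, e2, e3]
  rw [hYk 2, hYk 4, hdk, hdk, hhk, hhk, hxk, hxk,
    rademacher_even 2 (by decide), rademacher_even 4 (by decide),
    nakagami_sq m hm, nakagami_p4 m hm, arcsine_sq, arcsine_p4]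
  field_simp
end
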